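/- Let φ and Φ denote the standard normal density and CDF respectively. For λ ≥ 0, define I(λ) = ∫₀^∞ z² Φ(λz) φ(z) dz. Then dI/dλ = 1/(π(1+λ²)²) for all λ > 0, and consequently I(λ) = 1/4 + (1/(2π))(arctan λ + λ/(1+λ²)). -/

import Mathlib

open MeasureTheory

noncomputable def stdGaussPDF (z : ℝ) : ℝ :=
  (Real.sqrt (2 * Real.pi))⁻¹ * Real.exp (-z ^ 2 / 2)

noncomputable def stdGaussCDF (z : ℝ) : ℝ :=
  ∫ t in Set.Iic z, stdGaussPDF t

noncomputable def Ifun (l : ℝ) : ℝ :=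
  ∫ z in Set.Ioi (0 : ℝ), z ^ 2 * stdGaussCDF (l * z) * stdGaussPDF z

open Real Set Filter Topology

lemma pdf_eq (z : ℝ) : Real.exp (-z ^ 2 / 2) = Real.exp (-(1/2) * z ^ 2) := by ring_nf

lemma pow_int (b : ℝ) (hb : 0 < b) (n : ℕ) :
    IntegrableOn (fun z : ℝ => z ^ n * Real.exp (-b * z ^ 2)) (Ioi 0) := by
  have h := integrableOn_rpow_mul_exp_neg_mul_sq hb (s := (n : ℝ)) (lt_of_lt_of_le neg_one_lt_zero (Nat.cast_nonneg n))
  exact h.congr_fun (fun x hx => by dsimp only; rw [Real.rpow_natCast]) measurableSet_Ioi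

lemma pow_tendsto (b : ℝ) (hb : 0 < b) (n : ℕ) :
    Tendsto (fun z : ℝ => z ^ n * Real.exp (-b * z ^ 2)) atTop (𝓝 0) := by
  have h := rpow_mul_exp_neg_mul_sq_isLittleO_exp_neg hb (n : ℝ)
  have h2 : Tendsto (fun x : ℝ => Real.exp (-(1/2) * x)) atTop (𝓝 0) := by
    apply Real.tendsto_exp_atBot.comp
    exact Tendsto.const_mul_atTop_of_neg (by norm_num) tendsto_id
  have := h.tendsto_zero_of_tendsto h2
  apply this.congr'
  filter_upwards [eventually_gt_atTop (0:ℝ)] with x hx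
  rw [Real.rpow_natCast]

lemma gauss_Ioi : ∫ z in Ioi (0:ℝ), Real.exp (-z ^ 2 / 2) = Real.sqrt (2 * π) / 2 := by
  simp_rw [pdf_eq]
  rw [integral_gaussian_Ioi]
  rw [show π / (1/2) = 2 * π by ring]

lemma sq_integral : ∫ z in Ioi (0:ℝ), z ^ 2 * Real.exp (-z ^ 2 / 2) = Real.sqrt (2 * π) / 2 := by
  have hint2 : IntegrableOn (fun z : ℝ => z ^ 2 * Real.exp (-z ^ 2 / 2)) (Ioi 0) := by
    simp_rw [pdf_eq]; exact pow_int (1/2) (by norm_num) 2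
  have hint0 : IntegrableOn (fun z : ℝ => Real.exp (-z ^ 2 / 2)) (Ioi 0) := by
    simp_rw [pdf_eq]
    simpa using pow_int (1/2) (by norm_num) 0
  have key : ∫ z in Ioi (0:ℝ), (z ^ 2 * Real.exp (-z ^ 2 / 2) - Real.exp (-z ^ 2 / 2))
      = 0 - (-(0:ℝ) * Real.exp (-(0:ℝ) ^ 2 / 2)) := by
    apply integral_Ioi_of_hasDerivAt_of_tendsto' (f := fun z => -z * Real.exp (-z ^ 2 / 2))
    · intro x _
      have h1 : HasDerivAt (fun z : ℝ => -z ^ 2 / 2) (-x) x := by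
        have := ((hasDerivAt_pow 2 x).neg).div_const 2
        simpa using this.congr_deriv (by ring)
      have h2 := (h1.exp).const_mul (-x)
      have h3 := (h1.exp).mul_const 1
      have := (Real.hasDerivAt_exp _).comp x h1
      have hx : HasDerivAt (fun z : ℝ => -z * Real.exp (-z ^ 2 / 2))
          ((-1) * Real.exp (-x ^ 2 / 2) + (-x) * (Real.exp (-x ^ 2 / 2) * (-x))) x :=
        (hasDerivAt_id x).neg.mul this
      refine hx.congr_deriv ?_
      ring
    · exact hint2.sub hint0
    · have h := pow_tendsto (1/2) (by norm_num) 1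
      have : Tendsto (fun z : ℝ => -z * Real.exp (-z ^ 2 / 2)) atTop (𝓝 (-0)) := by
        simp_rw [pdf_eq, neg_mul]
        exact (h.congr (by intro x; ring_nf)).neg
      simpa using this
  rw [integral_sub hint2 hint0, gauss_Ioi] at key
  linarith

lemma cube_int (c : ℝ) (hc : 0 < c) :
    IntegrableOn (fun z : ℝ => z ^ 3 * Real.exp (-c * z ^ 2 / 2)) (Ioi 0) := by
  have h := pow_int (c/2) (by positivity) 3
  exact h.congr_fun (fun x _ => by dsimp only; rw [show -(c/2) * x ^ 2 = -c * x ^ 2 / 2 by ring])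
    measurableSet_Ioi

lemma cube_integral (c : ℝ) (hc : 0 < c) :
    ∫ z in Ioi (0:ℝ), z ^ 3 * Real.exp (-c * z ^ 2 / 2) = 2 / c ^ 2 := by
  have key : ∫ z in Ioi (0:ℝ), z ^ 3 * Real.exp (-c * z ^ 2 / 2)
      = 0 - (-((0:ℝ) ^ 2 / c + 2 / c ^ 2) * Real.exp (-c * (0:ℝ) ^ 2 / 2)) := by
    apply integral_Ioi_of_hasDerivAt_of_tendsto'
      (f := fun z => -(z ^ 2 / c + 2 / c ^ 2) * Real.exp (-c * z ^ 2 / 2))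
    · intro x _
      have h1 : HasDerivAt (fun z : ℝ => -c * z ^ 2 / 2) (-c * x) x := by
        have := (((hasDerivAt_pow 2 x).const_mul (-c)).div_const 2)
        simpa using this.congr_deriv (by ring)
      have h2 := (Real.hasDerivAt_exp _).comp x h1
      have h3 : HasDerivAt (fun z : ℝ => -(z ^ 2 / c + 2 / c ^ 2)) (-(2 * x / c)) x := by
        have := (((hasDerivAt_pow 2 x).div_const c).add_const (2 / c ^ 2)).neg
        exact this.congr_deriv (show -(((2:ℕ):ℝ) * x ^ (2 - 1) / c) = -(2 * x / c) by push_cast; ring)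
      have hx := h3.mul h2
      refine hx.congr_deriv ?_
      simp only [Function.comp_apply]
      field_simp
      ring
    · exact cube_int c hc
    · have h0 := pow_tendsto (c/2) (by positivity) 0
      have h2 := pow_tendsto (c/2) (by positivity) 2
      have : Tendsto (fun z : ℝ => -((1/c) * (z ^ 2 * Real.exp (-(c/2) * z ^ 2))
          + (2/c^2) * (z ^ 0 * Real.exp (-(c/2) * z ^ 2)))) atTop (𝓝 (-((1/c) * 0 + (2/c^2) * 0))) :=
        ((h2.const_mul _).add (h0.const_mul _)).neg
      simp only [mul_zero, add_zero, neg_zero] at this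
      apply this.congr
      intro x
      rw [show -(c/2) * x ^ 2 = -c * x ^ 2 / 2 by ring]
      ring
  rw [key]
  field_simp
  simp


lemma sqrt2pi_pos : 0 < Real.sqrt (2 * π) := Real.sqrt_pos.2 (by positivity)

lemma pdf_cont : Continuous stdGaussPDF := by
  unfold stdGaussPDF
  fun_prop

lemma pdf_integrable : Integrable stdGaussPDF := by
  unfold stdGaussPDF
  simp_rw [pdf_eq]
  exact (integrable_exp_neg_mul_sq (by norm_num : (0:ℝ) < 1/2)).const_mul _

lemma cdf_zero : stdGaussCDF 0 = 1 / 2 := by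
  unfold stdGaussCDF
  have h1 : ∫ t in Iic (0:ℝ), stdGaussPDF t = ∫ t in Ioi (0:ℝ), stdGaussPDF t := by
    rw [show (Ioi (0:ℝ)) = Ioi (-(0:ℝ)) by norm_num, ← integral_comp_neg_Iic]
    apply setIntegral_congr_fun measurableSet_Iic
    intro x _
    simp [stdGaussPDF, neg_pow]
  have h2 : ∫ t in Ioi (0:ℝ), stdGaussPDF t = 1 / 2 := by
    unfold stdGaussPDF
    rw [integral_const_mul, gauss_Ioi]
    field_simp
  rw [h1, h2]

lemma cdf_split (z l : ℝ) (hz : 0 < z) :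
    stdGaussCDF (l * z) = 1 / 2 + ∫ s in (0:ℝ)..l, z * stdGaussPDF (s * z) := by
  have h1 : stdGaussCDF (l * z) - stdGaussCDF 0 = ∫ t in (0:ℝ)..(l * z), stdGaussPDF t :=
    intervalIntegral.integral_Iic_sub_Iic pdf_integrable.integrableOn pdf_integrable.integrableOn
  have h2 : (∫ s in (0:ℝ)..l, stdGaussPDF (z * s))
      = z⁻¹ • ∫ t in (z * 0)..(z * l), stdGaussPDF t :=
    intervalIntegral.integral_comp_mul_left _ hz.ne'
  have h3 : (∫ s in (0:ℝ)..l, z * stdGaussPDF (s * z)) = ∫ t in (0:ℝ)..(l * z), stdGaussPDF t := by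
    simp_rw [mul_comm]
    rw [intervalIntegral.integral_const_mul, h2, smul_eq_mul, ← mul_assoc,
      mul_inv_cancel₀ hz.ne', one_mul, mul_zero, mul_comm z l]
  rw [h3, ← h1, cdf_zero]
  ring

lemma pdf_prod (s z : ℝ) : z ^ 2 * (z * stdGaussPDF (s * z)) * stdGaussPDF z
    = (2 * π)⁻¹ * (z ^ 3 * Real.exp (-(1 + s ^ 2) * z ^ 2 / 2)) := by
  have e1 : (Real.sqrt (2 * π))⁻¹ * (Real.sqrt (2 * π))⁻¹ = (2 * π)⁻¹ := by
    rw [← mul_inv, Real.mul_self_sqrt (by positivity)]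
  have e2 : Real.exp (-(s * z) ^ 2 / 2) * Real.exp (-z ^ 2 / 2)
      = Real.exp (-(1 + s ^ 2) * z ^ 2 / 2) := by
    rw [← Real.exp_add]; ring_nf
  simp only [stdGaussPDF]
  calc z ^ 2 * (z * ((Real.sqrt (2 * π))⁻¹ * Real.exp (-(s * z) ^ 2 / 2)))
        * ((Real.sqrt (2 * π))⁻¹ * Real.exp (-z ^ 2 / 2))
      = ((Real.sqrt (2 * π))⁻¹ * (Real.sqrt (2 * π))⁻¹)
        * (z ^ 3 * (Real.exp (-(s * z) ^ 2 / 2) * Real.exp (-z ^ 2 / 2))) := by ring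
    _ = (2 * π)⁻¹ * (z ^ 3 * Real.exp (-(1 + s ^ 2) * z ^ 2 / 2)) := by rw [e1, e2]

lemma inner_int (s : ℝ) :
    ∫ z in Ioi (0:ℝ), z ^ 2 * (z * stdGaussPDF (s * z)) * stdGaussPDF z
      = 1 / (π * (1 + s ^ 2) ^ 2) := by
  have hc : (0:ℝ) < 1 + s ^ 2 := by positivity
  simp_rw [pdf_prod]
  rw [integral_const_mul, cube_integral _ hc]
  have hπ : (0:ℝ) < π := Real.pi_pos
  field_simp

lemma prod_integrable (l : ℝ) :
    Integrable (Function.uncurry fun z s => z ^ 2 * (z * stdGaussPDF (s * z)) * stdGaussPDF z)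
      ((volume.restrict (Ioi 0)).prod (volume.restrict (Ioc 0 l))) := by
  have h1 : Integrable (fun z : ℝ => z ^ 3 * Real.exp (-1 * z ^ 2 / 2))
      (volume.restrict (Ioi 0)) := cube_int 1 one_pos
  have h2 : Integrable (fun _ : ℝ => (2 * π)⁻¹) (volume.restrict (Ioc 0 l)) :=
    integrableOn_const measure_Ioc_lt_top.ne
  apply Integrable.mono' (h1.mul_prod h2)
  · apply Continuous.aestronglyMeasurable
    exact ((continuous_fst.pow 2).mul (continuous_fst.mul
      (pdf_cont.comp (continuous_snd.mul continuous_fst)))).mul (pdf_cont.comp continuous_fst)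
  · rw [Measure.prod_restrict]
    filter_upwards [ae_restrict_mem (measurableSet_Ioi.prod measurableSet_Ioc)] with p hp
    obtain ⟨hz, _⟩ := hp
    have hz' : (0:ℝ) < p.1 := hz
    rw [Function.uncurry, pdf_prod, Real.norm_eq_abs, abs_of_nonneg (by positivity)]
    rw [mul_comm ((2 * π)⁻¹)]
    have hb : -(1 + p.2 ^ 2) * p.1 ^ 2 / 2 ≤ -1 * p.1 ^ 2 / 2 := by nlinarith [sq_nonneg (p.2 * p.1)]
    gcongr


lemma hasDerivAt_G (x : ℝ) :
    HasDerivAt (fun s : ℝ => (1 / (2 * π)) * (Real.arctan s + s / (1 + s ^ 2)))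
      (1 / (π * (1 + x ^ 2) ^ 2)) x := by
  have hx : (0:ℝ) < 1 + x ^ 2 := by positivity
  have h1 : HasDerivAt Real.arctan (1 / (1 + x ^ 2)) x := Real.hasDerivAt_arctan x
  have hden : HasDerivAt (fun s : ℝ => 1 + s ^ 2) (2 * x) x := by
    simpa using (hasDerivAt_pow 2 x).const_add 1
  have h2 : HasDerivAt (fun s : ℝ => s / (1 + s ^ 2))
      ((1 * (1 + x ^ 2) - x * (2 * x)) / (1 + x ^ 2) ^ 2) x :=
    (hasDerivAt_id x).div hden hx.ne'
  have h3 := (h1.add h2).const_mul (1 / (2 * π))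
  apply h3.congr_deriv
  have hπ : (0:ℝ) < π := Real.pi_pos
  field_simp
  ring

lemma Ifun_value (l : ℝ) (hl : 0 ≤ l) :
    Ifun l = 1 / 4 + (1 / (2 * π)) * (Real.arctan l + l / (1 + l ^ 2)) := by
  have hsq : IntegrableOn (fun z : ℝ => 1 / 2 * (z ^ 2 * stdGaussPDF z)) (Ioi 0) := by
    have h : IntegrableOn
        (fun z : ℝ => 1 / 2 * (Real.sqrt (2 * π))⁻¹ * (z ^ 2 * Real.exp (-(1/2) * z ^ 2)))
        (Ioi 0) := (pow_int (1/2) (by norm_num) 2).const_mul (1 / 2 * (Real.sqrt (2 * π))⁻¹)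
    apply h.congr_fun _ measurableSet_Ioi
    intro x _
    simp only [stdGaussPDF, pdf_eq]
    ring
  have hprod := prod_integrable l
  have hsnd := hprod.integral_prod_left
  simp only [Function.uncurry_apply_pair] at hsnd
  have key : Ifun l = ∫ z in Ioi (0:ℝ), (1 / 2 * (z ^ 2 * stdGaussPDF z)
      + ∫ s in Ioc (0:ℝ) l, z ^ 2 * (z * stdGaussPDF (s * z)) * stdGaussPDF z) := by
    unfold Ifun
    apply setIntegral_congr_fun measurableSet_Ioi
    intro z hz
    dsimp only
    rw [cdf_split z l hz]
    have hT : z ^ 2 * (∫ s in (0:ℝ)..l, z * stdGaussPDF (s * z)) * stdGaussPDF z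
        = ∫ s in (0:ℝ)..l, z ^ 2 * (z * stdGaussPDF (s * z)) * stdGaussPDF z := by
      rw [← intervalIntegral.integral_const_mul, ← intervalIntegral.integral_mul_const]
    rw [show z ^ 2 * (1 / 2 + ∫ s in (0:ℝ)..l, z * stdGaussPDF (s * z)) * stdGaussPDF z
        = 1 / 2 * (z ^ 2 * stdGaussPDF z)
          + z ^ 2 * (∫ s in (0:ℝ)..l, z * stdGaussPDF (s * z)) * stdGaussPDF z by ring,
      hT, intervalIntegral.integral_of_le hl]
  rw [key, integral_add hsq hsnd]
  have hfst : ∫ z in Ioi (0:ℝ), 1 / 2 * (z ^ 2 * stdGaussPDF z) = 1 / 4 := by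
    have : ∀ z : ℝ, 1 / 2 * (z ^ 2 * stdGaussPDF z)
        = 1 / 2 * (Real.sqrt (2 * π))⁻¹ * (z ^ 2 * Real.exp (-z ^ 2 / 2)) := by
      intro z; simp only [stdGaussPDF]; ring
    simp_rw [this]
    rw [integral_const_mul, sq_integral]
    field_simp [sqrt2pi_pos.ne']
    ring
  have hswap := integral_integral_swap hprod
  have hsecond : (∫ z in Ioi (0:ℝ), ∫ s in Ioc (0:ℝ) l,
        z ^ 2 * (z * stdGaussPDF (s * z)) * stdGaussPDF z)
      = (1 / (2 * π)) * (Real.arctan l + l / (1 + l ^ 2)) := by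
    rw [hswap]
    have : ∀ s : ℝ, (∫ z in Ioi (0:ℝ), z ^ 2 * (z * stdGaussPDF (s * z)) * stdGaussPDF z)
        = 1 / (π * (1 + s ^ 2) ^ 2) := inner_int
    simp_rw [this]
    rw [← intervalIntegral.integral_of_le hl]
    rw [intervalIntegral.integral_eq_sub_of_hasDerivAt (fun x _ => hasDerivAt_G x)]
    · simp [Real.arctan_zero]
    · apply Continuous.intervalIntegrable
      have : ∀ x : ℝ, (0:ℝ) < π * (1 + x ^ 2) ^ 2 := fun x => by positivity
      fun_prop (disch := intros; exact (this _).ne')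
  rw [hfst, hsecond]

theorem Ifun_deriv_and_value :
    (∀ l : ℝ, 0 < l →
        HasDerivAt Ifun (1 / (Real.pi * (1 + l ^ 2) ^ 2)) l) ∧
    (∀ l : ℝ, 0 ≤ l →
        Ifun l = 1 / 4 +
          (1 / (2 * Real.pi)) * (Real.arctan l + l / (1 + l ^ 2))) := by
  constructor
  · intro l hl
    have hF : HasDerivAt (fun x : ℝ => 1 / 4 + (1 / (2 * π)) * (Real.arctan x + x / (1 + x ^ 2)))
        (1 / (π * (1 + l ^ 2) ^ 2)) l := (hasDerivAt_G l).const_add (1 / 4)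
    apply hF.congr_of_eventuallyEq
    filter_upwards [Ioi_mem_nhds hl] with x hx
    exact Ifun_value x (le_of_lt hx)
  · exact fun l hl => Ifun_value l hl
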